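/- Let X and Y be nonzero Banach spaces. If the space B(X, Y) of bounded linear operators from X to Y has the ball-covering property, then both the dual space X* and the space Y have the ball-covering property. -/

import Mathlib

open Metric ZeroAtInfty
open scoped ENNReal

/-- A normed space has the ball-covering property (BCP) if there is a countable family of
closed balls, none containing the origin (`0 < r n < ‖c n‖`), covering the unit sphere. -/
def HasBCP (X : Type*) [NormedAddCommGroup X] : Prop :=
  ∃ (c : ℕ → X) (r : ℕ → ℝ),
    (∀ n, 0 < r n ∧ r n < ‖c n‖) ∧
    sphere (0 : X) 1 ⊆ ⋃ n, closedBall (c n) (r n)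

/-- The strong ball-covering property: the radii are uniformly bounded above. -/
def HasSBCP (X : Type*) [NormedAddCommGroup X] : Prop :=
  ∃ (c : ℕ → X) (r : ℕ → ℝ),
    (∀ n, 0 < r n ∧ r n < ‖c n‖) ∧
    (∃ M : ℝ, ∀ n, r n ≤ M) ∧
    sphere (0 : X) 1 ⊆ ⋃ n, closedBall (c n) (r n)

/-- The uniform ball-covering property: strong BCP together with a closed ball around the
origin disjoint from all the balls of the covering. -/
def HasUBCP (X : Type*) [NormedAddCommGroup X] : Prop :=
  ∃ (c : ℕ → X) (r : ℕ → ℝ),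
    (∀ n, 0 < r n ∧ r n < ‖c n‖) ∧
    (∃ M : ℝ, ∀ n, r n ≤ M) ∧
    (∃ ρ : ℝ, 0 < ρ ∧ ∀ n, Disjoint (closedBall (0 : X) ρ) (closedBall (c n) (r n))) ∧
    sphere (0 : X) 1 ⊆ ⋃ n, closedBall (c n) (r n)

/-- A topological space has a countable π-basis if there is a countable family of nonempty
open sets such that every nonempty open set contains a member of the family. -/
def HasCountablePiBasis (K : Type*) [TopologicalSpace K] : Prop :=
  ∃ B : Set (Set K), B.Countable ∧ (∀ U ∈ B, IsOpen U ∧ U.Nonempty) ∧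
    ∀ V : Set K, IsOpen V → V.Nonempty → ∃ U ∈ B, U ⊆ V

lemma hasBCP_aux {W : Type*} [NormedAddCommGroup W] [NormedSpace ℝ W]
    (w₁ : W) (hw₁ : w₁ ≠ 0)
    (a : ℕ → ℝ) (c : ℕ → W) (r : ℕ → ℝ)
    (hr : ∀ n, 0 < r n) (hc : ∀ n, r n < ‖c n‖)
    (hcov : ∀ w : W, ‖w‖ = 1 → ∃ n, ‖a n • w - c n‖ ≤ r n) :
    ∃ (c : ℕ → W) (r : ℕ → ℝ),
      (∀ n, 0 < r n ∧ r n < ‖c n‖) ∧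
      sphere (0 : W) 1 ⊆ ⋃ n, closedBall (c n) (r n) := by
  refine ⟨fun n => if a n = 0 then w₁ else (a n)⁻¹ • c n,
    fun n => if a n = 0 then ‖w₁‖ / 2 else r n / |a n|, fun n => ?_, fun w hw => ?_⟩
  · by_cases h0 : a n = 0
    · simp only [h0, if_true]
      have := norm_pos_iff.2 hw₁
      constructor <;> linarith
    · simp only [h0, if_false]
      have ha : 0 < |a n| := abs_pos.2 h0
      constructor
      · exact div_pos (hr n) ha
      · rw [norm_smul, norm_inv, Real.norm_eq_abs, div_lt_iff₀ ha, inv_mul_eq_div,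
          div_mul_eq_mul_div, mul_div_assoc, div_self (ne_of_gt ha), mul_one]
        exact hc n
  · rw [mem_sphere_zero_iff_norm] at hw
    obtain ⟨n, hn⟩ := hcov w hw
    have h0 : a n ≠ 0 := by
      intro h0
      rw [h0, zero_smul, zero_sub, norm_neg] at hn
      exact absurd hn (not_le.2 (hc n))
    refine Set.mem_iUnion.2 ⟨n, ?_⟩
    simp only [h0, if_false, mem_closedBall, dist_eq_norm]
    have : w - (a n)⁻¹ • c n = (a n)⁻¹ • (a n • w - c n) := by
      rw [smul_sub, inv_smul_smul₀ h0]
    rw [this, norm_smul, norm_inv, Real.norm_eq_abs, div_eq_inv_mul]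
    exact mul_le_mul_of_nonneg_left hn (by positivity)

theorem bcp_dual_and_codomain_of_bcp_operators
    (X : Type*) [NormedAddCommGroup X] [NormedSpace ℝ X] [CompleteSpace X] [Nontrivial X]
    (Y : Type*) [NormedAddCommGroup Y] [NormedSpace ℝ Y] [CompleteSpace Y] [Nontrivial Y]
    (h : HasBCP (X →L[ℝ] Y)) :
    HasBCP (StrongDual ℝ X) ∧ HasBCP Y := by
  obtain ⟨T, r, hb, hcov⟩ := h
  have hr : ∀ n, 0 < r n := fun n => (hb n).1
  have hT : ∀ n, r n < ‖T n‖ := fun n => (hb n).2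
  -- choose almost-norming points x n
  choose x hx1 hx2 using fun n => (T n).exists_lt_apply_of_lt_opNorm (hT n)
  have hTx0 : ∀ n, T n (x n) ≠ 0 := by
    intro n hn
    have h2 := hx2 n
    rw [hn, norm_zero] at h2
    exact absurd h2 (not_lt.2 (hr n).le)
  -- norming functionals at T n (x n)
  choose g hg1 hg2 using fun n => exists_dual_vector ℝ (T n (x n)) (norm_ne_zero_iff.2 (hTx0 n))
  -- a norm-one functional on X and a norm-one vector in Y
  obtain ⟨x₀, hx₀⟩ := exists_ne (0 : X)
  obtain ⟨f₀, hf₀, _⟩ := exists_dual_vector ℝ x₀ (norm_ne_zero_iff.2 hx₀)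
  obtain ⟨y', hy'⟩ := exists_ne (0 : Y)
  set y₀ : Y := ‖y'‖⁻¹ • y' with hy₀def
  have hy₀ : ‖y₀‖ = 1 := norm_smul_inv_norm hy'
  have hy₀ne : y₀ ≠ 0 := by
    intro hz; rw [hz, norm_zero] at hy₀; exact zero_ne_one hy₀
  have hxle : ∀ n, ‖x n‖ ≤ 1 := fun n => (hx1 n).le
  constructor
  · -- dual case
    have hf₀ne : f₀ ≠ 0 := by
      intro hz; rw [hz, norm_zero] at hf₀; exact zero_ne_one hf₀
    refine hasBCP_aux (f₀ : StrongDual ℝ X) hf₀ne (fun n => g n y₀)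
      (fun n => (g n).comp (T n)) r hr (fun n => ?_) (fun f hf => ?_)
    · -- r n < ‖g n ∘ T n‖
      have h1 : ‖T n (x n)‖ ≤ ‖(g n).comp (T n)‖ := by
        calc ‖T n (x n)‖ = ‖g n (T n (x n))‖ := by rw [hg2 n]; simp
          _ = ‖((g n).comp (T n)) (x n)‖ := rfl
          _ ≤ ‖(g n).comp (T n)‖ * ‖x n‖ := ((g n).comp (T n)).le_opNorm _
          _ ≤ ‖(g n).comp (T n)‖ * 1 := by
              exact mul_le_mul_of_nonneg_left (hxle n) (norm_nonneg _)
          _ = ‖(g n).comp (T n)‖ := mul_one _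
      exact lt_of_lt_of_le (hx2 n) h1
    · -- coverage
      have hemb : ‖(f : X →L[ℝ] ℝ).smulRight y₀‖ = 1 := by
        rw [ContinuousLinearMap.norm_smulRight_apply, hy₀, mul_one]
        exact hf
      have hmem := hcov (by rwa [mem_sphere_zero_iff_norm])
      obtain ⟨n, hn⟩ := Set.mem_iUnion.1 hmem
      rw [mem_closedBall, dist_eq_norm] at hn
      refine ⟨n, ?_⟩
      have hkey : (g n y₀) • f - (g n).comp (T n)
          = (g n).comp ((f : X →L[ℝ] ℝ).smulRight y₀ - T n) := by
        rw [ContinuousLinearMap.comp_sub]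
        congr 1
        ext z
        simp [mul_comm]
      rw [hkey]
      calc ‖(g n).comp ((f : X →L[ℝ] ℝ).smulRight y₀ - T n)‖
          ≤ ‖g n‖ * ‖(f : X →L[ℝ] ℝ).smulRight y₀ - T n‖ :=
            ContinuousLinearMap.opNorm_comp_le _ _
        _ ≤ 1 * r n := by
              rw [hg1 n]; exact mul_le_mul_of_nonneg_left hn zero_le_one
        _ = r n := one_mul _
  · -- codomain case
    refine hasBCP_aux y₀ hy₀ne (fun n => f₀ (x n)) (fun n => T n (x n)) r hr
      (fun n => hx2 n) (fun y hy => ?_)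
    have hemb : ‖f₀.smulRight y‖ = 1 := by
      rw [ContinuousLinearMap.norm_smulRight_apply, hf₀, hy, mul_one]
    have hmem := hcov (by rwa [mem_sphere_zero_iff_norm])
    obtain ⟨n, hn⟩ := Set.mem_iUnion.1 hmem
    rw [mem_closedBall, dist_eq_norm] at hn
    refine ⟨n, ?_⟩
    have hkey : f₀ (x n) • y - T n (x n) = (f₀.smulRight y - T n) (x n) := by
      simp
    rw [hkey]
    calc ‖(f₀.smulRight y - T n) (x n)‖
        ≤ ‖f₀.smulRight y - T n‖ * ‖x n‖ := (f₀.smulRight y - T n).le_opNorm _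
      _ ≤ r n * 1 := mul_le_mul hn (hxle n) (norm_nonneg _) (hr n).le
      _ = r n := mul_one _
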